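/- Let A(·) : [0,∞) → ℝ^{d×d} be continuous with A(t) → A as t → ∞, where every complex eigenvalue of the limit matrix A has real part at most λ. For each s ≥ 0 let Φ_s(·) be the fundamental matrix solution of d/dt Φ_s(t) = A(t) Φ_s(t) with Φ_s(s) = I. Then for every α > 0 there is a constant K_α such that ‖Φ_s(t)‖ ≤ K_α e^{(λ+α)(t−s)} for all t ≥ s ≥ 0. -/

import Mathlib

open Filter Set NormedSpace

set_option maxHeartbeats 1000000
set_option synthInstance.maxHeartbeats 400000

-- L1
lemma pow_div_factorial_le_exp {β : ℝ} (hβ : 0 < β) (t : ℝ) (ht : 0 ≤ t) (n : ℕ) :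
    t ^ n / n.factorial ≤ Real.exp (β * t) / β ^ n := by
  rw [div_le_div_iff₀ (by positivity) (by positivity)]
  have h := Real.sum_le_exp_of_nonneg (by positivity : (0:ℝ) ≤ β * t) (n+1)
  have h2 : (β * t) ^ n / n.factorial ≤ Real.exp (β * t) := by
    refine le_trans ?_ h
    refine Finset.single_le_sum (f := fun k => (β*t)^k / k.factorial) (fun i _ => by positivity) (Finset.self_mem_range_succ n)
  calc t ^ n * β ^ n = (β * t) ^ n := by rw [mul_pow]; ring
    _ ≤ Real.exp (β * t) * n.factorial := by
        rw [div_le_iff₀ (by positivity)] at h2; linarith [h2]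

-- L5 Gronwall integral form
lemma gronwall_int {s C : ℝ} {g h : ℝ → ℝ} (hg : Continuous g) (hh : Continuous h)
    (hh0 : ∀ u, 0 ≤ h u) (hle : ∀ t ≥ s, g t ≤ C + ∫ u in s..t, h u * g u) :
    ∀ t ≥ s, g t ≤ C * Real.exp (∫ u in s..t, h u) := by
  intro t ht
  set G : ℝ → ℝ := fun t => ∫ u in s..t, h u * g u with hG
  set H : ℝ → ℝ := fun t => ∫ u in s..t, h u with hH
  have hGd : ∀ x, HasDerivAt G (h x * g x) x := fun x =>
    (intervalIntegral.integral_hasDerivAt_right ((hh.mul hg).intervalIntegrable _ _)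
      ((hh.mul hg).stronglyMeasurableAtFilter _ _) (hh.mul hg).continuousAt)
  have hHd : ∀ x, HasDerivAt H (h x) x := fun x =>
    (intervalIntegral.integral_hasDerivAt_right (hh.intervalIntegrable _ _)
      (hh.stronglyMeasurableAtFilter _ _) hh.continuousAt)
  set F : ℝ → ℝ := fun t => (C + G t) * Real.exp (-H t) with hF
  have hFd : ∀ x, HasDerivAt F ((h x * g x) * Real.exp (-H x)
      + (C + G x) * (Real.exp (-H x) * -(h x))) x := by
    intro x
    exact (((hGd x).const_add C)).mul (((hHd x).neg).exp)
  have hanti : AntitoneOn F (Ici s) := by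
    refine antitoneOn_of_deriv_nonpos (convex_Ici s) ?_ ?_ ?_
    · exact fun x _ => ((hFd x).continuousAt).continuousWithinAt
    · intro x hx; exact (hFd x).differentiableAt.differentiableWithinAt
    · intro x hx
      rw [(hFd x).deriv]
      rw [interior_Ici] at hx
      have hgle := hle x (le_of_lt hx)
      have : (h x * g x) * Real.exp (-H x) + (C + G x) * (Real.exp (-H x) * -(h x))
          = h x * Real.exp (-H x) * (g x - (C + G x)) := by ring
      rw [this]
      have : g x - (C + G x) ≤ 0 := by simpa using hgle
      have hexp : (0:ℝ) ≤ Real.exp (-H x) := (Real.exp_pos _).le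
      exact mul_nonpos_of_nonneg_of_nonpos (mul_nonneg (hh0 x) hexp) this
  have hFt : F t ≤ F s := by
    refine hanti (by simp) (by simpa using ht) ht
  have hFs : F s = C := by simp [hF, hG, hH]
  have h1 : (C + G t) * Real.exp (-H t) ≤ C := by have := hFt; rwa [hFs] at this
  have h2 : g t ≤ C + G t := hle t ht
  have h3 : C + G t ≤ C * Real.exp (H t) := by
    have := mul_le_mul_of_nonneg_right h1 (le_of_lt (Real.exp_pos (H t)))
    rwa [mul_assoc, ← Real.exp_add, neg_add_cancel, Real.exp_zero, mul_one] at this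
  linarith

variable {E : Type*} [NormedAddCommGroup E] [NormedSpace ℂ E] [CompleteSpace E]

lemma pow_apply_norm_le (T : E →L[ℂ] E) (n : ℕ) (x : E) : ‖(T ^ n) x‖ ≤ ‖T‖ ^ n * ‖x‖ := by
  induction n with
  | zero => simp
  | succ n ih =>
    rw [pow_succ']
    calc ‖(T * T ^ n) x‖ = ‖T ((T ^ n) x)‖ := rfl
      _ ≤ ‖T‖ * ‖(T ^ n) x‖ := T.le_opNorm _
      _ ≤ ‖T‖ * (‖T‖ ^ n * ‖x‖) := mul_le_mul_of_nonneg_left ih (norm_nonneg T)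
      _ = ‖T‖ ^ (n+1) * ‖x‖ := by ring

lemma piece {f : E →L[ℂ] E} {μ : ℂ} {x : E} {k : ℕ}
    (hk : (((f - μ • 1) ^ k) x = 0)) {t : ℝ} (ht : 0 ≤ t) :
    ‖exp ((t:ℂ) • f) x‖ ≤ Real.exp (t * μ.re) *
      ((Finset.range k).sum fun n => t ^ n / n.factorial * ‖f - μ • 1‖ ^ n) * ‖x‖ := by
  letI : NormedAlgebra ℚ (E →L[ℂ] E) := .restrictScalars ℚ ℂ _
  set N : E →L[ℂ] E := f - μ • 1 with hN
  have hsplit : (t:ℂ) • f = ((t:ℂ) * μ) • (1 : E →L[ℂ] E) + (t:ℂ) • N := by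
    rw [hN, smul_sub, smul_smul]
    abel
  have hcomm : Commute (((t:ℂ) * μ) • (1 : E →L[ℂ] E)) ((t:ℂ) • N) :=
    (Commute.one_left ((t:ℂ) • N)).smul_left _
  have hexp : exp ((t:ℂ) • f) = Complex.exp ((t:ℂ) * μ) • exp ((t:ℂ) • N) := by
    rw [hsplit, exp_add_of_commute hcomm, ← Algebra.algebraMap_eq_smul_one ((t:ℂ) * μ),
      ← algebraMap_exp_comm, Complex.exp_eq_exp_ℂ, Algebra.algebraMap_eq_smul_one, smul_mul_assoc,
      one_mul]
  have happ : exp ((t:ℂ) • N) x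
      = ∑ n ∈ Finset.range k, ((n.factorial : ℂ))⁻¹ • ((t:ℂ) ^ n) • ((N ^ n) x) := by
    have hsum : Summable (fun n : ℕ => ((n.factorial : ℂ))⁻¹ • ((t:ℂ) • N) ^ n) :=
      expSeries_summable' (𝕂 := ℂ) ((t:ℂ) • N)
    have h1 : exp ((t:ℂ) • N) x = ∑' n : ℕ, ((((n.factorial : ℂ))⁻¹ • ((t:ℂ) • N) ^ n) x) := by
      rw [exp_eq_tsum (𝕂 := ℂ)]
      exact ((ContinuousLinearMap.apply ℂ E x).map_tsum hsum :)
    rw [h1]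
    refine (tsum_eq_sum ?_).trans (Finset.sum_congr rfl ?_)
    · intro n hn
      have hkn : k ≤ n := by simpa using hn
      have h0 : (N ^ n) x = 0 := by
        rw [← Nat.sub_add_cancel hkn, pow_add, ContinuousLinearMap.mul_apply, hk, map_zero]
      simp [smul_pow, h0]
    · intro n _
      simp only [smul_pow, ContinuousLinearMap.smul_apply]
  rw [hexp, ContinuousLinearMap.smul_apply, norm_smul, Complex.norm_exp,
    Complex.mul_re, Complex.ofReal_re, Complex.ofReal_im, zero_mul, sub_zero, happ, mul_assoc]
  refine mul_le_mul_of_nonneg_left ?_ (Real.exp_pos _).le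
  calc ‖∑ n ∈ Finset.range k, ((n.factorial : ℂ))⁻¹ • ((t:ℂ) ^ n) • ((N ^ n) x)‖
      ≤ ∑ n ∈ Finset.range k, ‖((n.factorial : ℂ))⁻¹ • ((t:ℂ) ^ n) • ((N ^ n) x)‖ :=
        norm_sum_le _ _
    _ ≤ ∑ n ∈ Finset.range k, t ^ n / n.factorial * ‖N‖ ^ n * ‖x‖ := by
        refine Finset.sum_le_sum fun n _ => ?_
        rw [norm_smul, norm_smul]
        simp only [norm_inv, Complex.norm_natCast, norm_pow, Complex.norm_real,
          Real.norm_eq_abs, abs_of_nonneg ht]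
        rw [div_eq_inv_mul, mul_assoc, mul_assoc]
        refine mul_le_mul_of_nonneg_left ?_ (by positivity)
        refine (mul_le_mul_of_nonneg_left (pow_apply_norm_le N n x)
          (pow_nonneg ht n)).trans (le_of_eq (by ring))
    _ = _ := by rw [← Finset.sum_mul]

variable {E : Type*} [NormedAddCommGroup E] [NormedSpace ℂ E] [CompleteSpace E]

lemma cexp_bound [FiniteDimensional ℂ E] (lam β : ℝ) (hβ : 0 < β) (f : E →L[ℂ] E)
    (hspec : ∀ μ : ℂ, Module.End.HasEigenvalue (f : E →ₗ[ℂ] E) μ → μ.re ≤ lam) :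
    ∃ C > 0, ∀ t : ℝ, 0 ≤ t → ‖exp ((t:ℂ) • f)‖ ≤ C * Real.exp ((lam + β) * t) := by
  classical
  set g : Module.End ℂ E := (f : E →ₗ[ℂ] E) with hg
  have htop := Module.End.iSup_maxGenEigenspace_eq_top g
  have hspan : Submodule.span ℂ (⋃ μ : ℂ, (g.maxGenEigenspace μ : Set E)) = ⊤ := by
    rw [Submodule.span_iUnion]
    simp_rw [Submodule.span_eq]
    exact htop
  obtain ⟨b, hbsub, hbspan, hbli⟩ :=
    exists_linearIndependent ℂ (⋃ μ : ℂ, ((g.maxGenEigenspace μ : Set E) : Set E))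
  rw [hspan] at hbspan
  let B : Module.Basis b ℂ E := Module.Basis.mk hbli (by rw [Subtype.range_coe, hbspan])
  haveI : Fintype b := FiniteDimensional.fintypeBasisIndex B
  have hBi : ∀ i : b, (B i : E) = ↑i := fun i => Module.Basis.mk_apply hbli _ i
  -- choose eigenvalue and nilpotency data for each basis vector
  have hdata : ∀ i : b, ∃ μ : ℂ, ∃ k : ℕ, (((f - μ • 1) ^ k) (i : E) = 0) ∧ μ.re ≤ lam := by
    intro i
    obtain ⟨μ, hμ⟩ := Set.mem_iUnion.mp (hbsub i.2)
    obtain ⟨k, hk⟩ := (Module.End.mem_maxGenEigenspace g μ _).mp hμ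
    have hfun : ⇑(f - μ • (1 : E →L[ℂ] E)) = ⇑(g - μ • (1 : Module.End ℂ E)) := by
      funext y
      simp [hg]
    have hpow : ∀ (m : ℕ) (y : E), ((f - μ • 1) ^ m) y = ((g - μ • (1 : Module.End ℂ E)) ^ m) y := by
      intro m
      induction m with
      | zero => intro y; simp
      | succ m ih =>
        intro y
        rw [pow_succ, pow_succ, ContinuousLinearMap.mul_apply, Module.End.mul_apply, ih,
          congrFun hfun y]
    have hCLM : (((f - μ • 1) ^ k) (i : E) = 0) := by
      rw [hpow k, hk]
    refine ⟨μ, k, hCLM, hspec μ ?_⟩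
    -- μ is an eigenvalue
    have hne : (i : E) ≠ 0 := by
      have := B.ne_zero i
      rwa [hBi i] at this
    have hkne : k ≠ 0 := by
      intro h0
      rw [h0, pow_zero] at hk
      exact hne (by simpa using hk)
    have hgen : g.HasGenEigenvalue μ k := by
      rw [Module.End.hasGenEigenvalue_iff]
      intro hbot
      have : (i : E) ∈ g.genEigenspace μ k := Module.End.mem_genEigenspace_nat.mpr hk
      rw [hbot] at this
      exact hne (by simpa using this)
    exact Module.End.hasEigenvalue_of_hasGenEigenvalue hgen
  choose μi ki hnil hre using hdata
  -- constants
  set D : b → ℝ := fun i =>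
    ((Finset.range (ki i)).sum fun n => ‖f - μi i • 1‖ ^ n / β ^ n) * ‖(i : E)‖ with hD
  set c : b → ℝ := fun i => ‖LinearMap.toContinuousLinearMap (B.coord i)‖ with hc
  set C : ℝ := (∑ i : b, c i * D i) + 1 with hC
  have hD0 : ∀ i, 0 ≤ D i := by
    intro i
    refine mul_nonneg (Finset.sum_nonneg fun n _ => by positivity) (norm_nonneg _)
  have hc0 : ∀ i, 0 ≤ c i := fun i => norm_nonneg _
  have hC0 : 0 < C := by
    have : 0 ≤ ∑ i : b, c i * D i :=
      Finset.sum_nonneg fun i _ => mul_nonneg (hc0 i) (hD0 i)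
    linarith
  refine ⟨C, hC0, fun t ht => ?_⟩
  rw [mul_comm C]
  refine ContinuousLinearMap.opNorm_le_bound _ (by positivity) fun x => ?_
  -- bound on each basis vector
  have hbv : ∀ i : b, ‖exp ((t:ℂ) • f) (i : E)‖ ≤ D i * Real.exp ((lam + β) * t) := by
    intro i
    refine (piece (hnil i) ht).trans ?_
    have h1 : Real.exp (t * (μi i).re) ≤ Real.exp (lam * t) := by
      rw [Real.exp_le_exp, mul_comm]
      exact mul_le_mul_of_nonneg_right (hre i) ht
    have h2 : ((Finset.range (ki i)).sum fun n => t ^ n / n.factorial * ‖f - μi i • 1‖ ^ n)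
        ≤ Real.exp (β * t) * ((Finset.range (ki i)).sum fun n => ‖f - μi i • 1‖ ^ n / β ^ n) := by
      rw [Finset.mul_sum]
      refine Finset.sum_le_sum fun n _ => ?_
      have := pow_div_factorial_le_exp hβ t ht n
      calc t ^ n / n.factorial * ‖f - μi i • 1‖ ^ n
          ≤ Real.exp (β * t) / β ^ n * ‖f - μi i • 1‖ ^ n :=
            mul_le_mul_of_nonneg_right this (by positivity)
        _ = Real.exp (β * t) * (‖f - μi i • 1‖ ^ n / β ^ n) := by ring
    calc Real.exp (t * (μi i).re) *
          ((Finset.range (ki i)).sum fun n => t ^ n / n.factorial * ‖f - μi i • 1‖ ^ n) * ‖(i : E)‖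
        ≤ Real.exp (lam * t) * (Real.exp (β * t) *
            ((Finset.range (ki i)).sum fun n => ‖f - μi i • 1‖ ^ n / β ^ n)) * ‖(i : E)‖ := by
          refine mul_le_mul_of_nonneg_right ?_ (norm_nonneg _)
          refine mul_le_mul h1 h2 (Finset.sum_nonneg fun n _ => by positivity) (Real.exp_pos _).le
      _ = D i * Real.exp ((lam + β) * t) := by
          rw [hD, show (lam + β) * t = lam * t + β * t by ring, Real.exp_add]
          ring
  -- decompose x
  have hx : exp ((t:ℂ) • f) x = ∑ i : b, B.repr x i • exp ((t:ℂ) • f) (B i) := by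
    conv_lhs => rw [← B.sum_repr x]
    rw [map_sum]
    exact Finset.sum_congr rfl fun i _ => by rw [map_smul]
  have hcoord : ∀ i : b, ‖B.repr x i‖ ≤ c i * ‖x‖ := by
    intro i
    have : B.repr x i = LinearMap.toContinuousLinearMap (B.coord i) x := by
      simp [Module.Basis.coord_apply]
    rw [this]
    exact (LinearMap.toContinuousLinearMap (B.coord i)).le_opNorm x
  calc ‖exp ((t:ℂ) • f) x‖ = ‖∑ i : b, B.repr x i • exp ((t:ℂ) • f) (B i)‖ := by rw [hx]
    _ ≤ ∑ i : b, ‖B.repr x i • exp ((t:ℂ) • f) (B i)‖ := norm_sum_le _ _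
    _ ≤ ∑ i : b, (c i * ‖x‖) * (D i * Real.exp ((lam + β) * t)) := by
        refine Finset.sum_le_sum fun i _ => ?_
        rw [norm_smul]
        refine mul_le_mul (hcoord i) ?_ (norm_nonneg _) (by positivity)
        rw [hBi i]
        exact hbv i
    _ = (∑ i : b, c i * D i) * (Real.exp ((lam + β) * t) * ‖x‖) := by
        rw [Finset.sum_mul]
        exact Finset.sum_congr rfl fun i _ => by ring
    _ ≤ C * (Real.exp ((lam + β) * t) * ‖x‖) := by
        refine mul_le_mul_of_nonneg_right ?_ (by positivity)
        rw [hC]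
        linarith
    _ = Real.exp ((lam + β) * t) * C * ‖x‖ := by ring

noncomputable def cmap (d : ℕ) : EuclideanSpace ℝ (Fin d) →ₗ[ℝ] EuclideanSpace ℂ (Fin d) where
  toFun x := (WithLp.toLp 2 (fun i => (x i : ℂ)) : EuclideanSpace ℂ (Fin d))
  map_add' x y := by ext i; simp
  map_smul' r x := by ext i; simp [Complex.real_smul]

lemma cmap_apply {d : ℕ} (x : EuclideanSpace ℝ (Fin d)) (i : Fin d) :
    (cmap d x) i = (x i : ℂ) := rfl

lemma cmap_norm {d : ℕ} (x : EuclideanSpace ℝ (Fin d)) : ‖cmap d x‖ = ‖x‖ := by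
  rw [EuclideanSpace.norm_eq, EuclideanSpace.norm_eq]
  congr 1
  exact Finset.sum_congr rfl fun i _ => by rw [cmap_apply, Complex.norm_real]

lemma real_exp_bound {d : ℕ} (lam β : ℝ) (hβ : 0 < β)
    (Alim : EuclideanSpace ℝ (Fin d) →L[ℝ] EuclideanSpace ℝ (Fin d))
    (hspec : ∀ μ : ℂ,
      ((Alim.toLinearMap.charpoly.map (algebraMap ℝ ℂ)).IsRoot μ) → μ.re ≤ lam) :
    ∃ C > 0, ∀ t : ℝ, 0 ≤ t →
      ‖exp (t • Alim)‖ ≤ C * Real.exp ((lam + β) * t) := by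
  classical
  set bR : Module.Basis (Fin d) ℝ (EuclideanSpace ℝ (Fin d)) :=
    (EuclideanSpace.basisFun (Fin d) ℝ).toBasis with hbR
  set bC : Module.Basis (Fin d) ℂ (EuclideanSpace ℂ (Fin d)) :=
    (EuclideanSpace.basisFun (Fin d) ℂ).toBasis with hbC
  set M : Matrix (Fin d) (Fin d) ℝ := LinearMap.toMatrix bR bR Alim.toLinearMap with hM
  set Mc : Matrix (Fin d) (Fin d) ℂ := M.map (algebraMap ℝ ℂ) with hMc
  set fL : EuclideanSpace ℂ (Fin d) →ₗ[ℂ] EuclideanSpace ℂ (Fin d) :=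
    Matrix.toEuclideanLin Mc with hfL
  set fc : EuclideanSpace ℂ (Fin d) →L[ℂ] EuclideanSpace ℂ (Fin d) :=
    LinearMap.toContinuousLinearMap fL with hfc
  have hfc_coe : (fc : EuclideanSpace ℂ (Fin d) →ₗ[ℂ] EuclideanSpace ℂ (Fin d)) = fL :=
    LinearMap.coe_toContinuousLinearMap fL
  -- charpoly identification
  have hchar : (fc : EuclideanSpace ℂ (Fin d) →ₗ[ℂ] EuclideanSpace ℂ (Fin d)).charpoly
      = Alim.toLinearMap.charpoly.map (algebraMap ℝ ℂ) := by
    rw [hfc_coe]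
    have hmat : LinearMap.toMatrix bC bC fL = Mc := by
      rw [hfL, Matrix.toEuclideanLin_eq_toLin_orthonormal, ← hbC, LinearMap.toMatrix_toLin]
    have h1 : fL.charpoly = Mc.charpoly := by
      rw [← fL.charpoly_toMatrix bC, hmat]
    have h2 : Alim.toLinearMap.charpoly = M.charpoly := by
      rw [hM, LinearMap.charpoly_toMatrix]
    rw [h1, h2, hMc, Matrix.charpoly_map]
  -- eigenvalue bound for fc
  have hspec' : ∀ μ : ℂ,
      Module.End.HasEigenvalue (fc : EuclideanSpace ℂ (Fin d) →ₗ[ℂ] EuclideanSpace ℂ (Fin d)) μ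
      → μ.re ≤ lam := by
    intro μ hμ
    refine hspec μ ?_
    rw [← hchar]
    have hroot : (minpoly ℂ (fc : EuclideanSpace ℂ (Fin d) →ₗ[ℂ] EuclideanSpace ℂ (Fin d))).IsRoot μ :=
      (Module.End.hasEigenvalue_iff_isRoot).mp hμ
    exact hroot.dvd (minpoly.dvd ℂ _ (LinearMap.aeval_self_charpoly _))
  obtain ⟨C, hC0, hCb⟩ := cexp_bound lam β hβ fc hspec'
  -- intertwining
  have hint : ∀ x, cmap d (Alim x) = fc (cmap d x) := by
    intro x
    have hA : Alim.toLinearMap = Matrix.toEuclideanLin M := by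
      rw [Matrix.toEuclideanLin_eq_toLin_orthonormal, ← hbR, hM, Matrix.toLin_toMatrix]
    ext i
    have hAx : (Alim x) i = (M.mulVec x) i := by
      change (Alim.toLinearMap x) i = _
      rw [hA]
      rfl
    have hfcx : (fc (cmap d x)) i = (Mc.mulVec (cmap d x)) i := rfl
    rw [cmap_apply, hAx, hfcx, Matrix.mulVec, Matrix.mulVec, dotProduct, dotProduct]
    push_cast
    refine Finset.sum_congr rfl fun j _ => ?_
    rw [hMc, Matrix.map_apply, cmap_apply]
    simp only [Complex.coe_algebraMap]
  -- exp intertwining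
  have hexp : ∀ (t : ℝ) (x),
      cmap d (exp (t • Alim) x) = exp ((t:ℂ) • fc) (cmap d x) := by
    intro t x
    have hsumR : Summable (fun n : ℕ => ((n.factorial : ℝ))⁻¹ • (t • Alim) ^ n) :=
      expSeries_summable' (𝕂 := ℝ) (t • Alim)
    have hsumC : Summable (fun n : ℕ => ((n.factorial : ℂ))⁻¹ • ((t:ℂ) • fc) ^ n) :=
      expSeries_summable' (𝕂 := ℂ) ((t:ℂ) • fc)
    have hint1 : ∀ v, cmap d ((t • Alim) v) = ((t:ℂ) • fc) (cmap d v) := by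
      intro v
      rw [ContinuousLinearMap.smul_apply, map_smul, hint, ContinuousLinearMap.smul_apply,
        Complex.coe_smul]
    have hintpow : ∀ (n : ℕ) (v), cmap d (((t • Alim) ^ n) v) = (((t:ℂ) • fc) ^ n) (cmap d v) := by
      intro n
      induction n with
      | zero => intro v; simp
      | succ n ih =>
        intro v
        rw [pow_succ, pow_succ, ContinuousLinearMap.mul_apply, ContinuousLinearMap.mul_apply,
          ih, hint1]
    have h1 : exp (t • Alim) x = ∑' n : ℕ, (((n.factorial : ℝ))⁻¹ • (t • Alim) ^ n) x := by
      rw [exp_eq_tsum (𝕂 := ℝ)]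
      exact ((ContinuousLinearMap.apply ℝ (EuclideanSpace ℝ (Fin d)) x).map_tsum hsumR :)
    have h2 : exp ((t:ℂ) • fc) (cmap d x)
        = ∑' n : ℕ, (((n.factorial : ℂ))⁻¹ • ((t:ℂ) • fc) ^ n) (cmap d x) := by
      rw [exp_eq_tsum (𝕂 := ℂ)]
      exact ((ContinuousLinearMap.apply ℂ (EuclideanSpace ℂ (Fin d)) (cmap d x)).map_tsum hsumC :)
    have hsum1 : Summable (fun n : ℕ => (((n.factorial : ℝ))⁻¹ • (t • Alim) ^ n) x) :=
      hsumR.map (ContinuousLinearMap.apply ℝ (EuclideanSpace ℝ (Fin d)) x)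
        (ContinuousLinearMap.apply ℝ (EuclideanSpace ℝ (Fin d)) x).continuous
    rw [h1, h2]
    have h3 : cmap d (∑' n : ℕ, (((n.factorial : ℝ))⁻¹ • (t • Alim) ^ n) x)
        = ∑' n : ℕ, cmap d ((((n.factorial : ℝ))⁻¹ • (t • Alim) ^ n) x) :=
      (LinearMap.toContinuousLinearMap (cmap d)).map_tsum hsum1
    rw [h3]
    refine tsum_congr fun n => ?_
    rw [ContinuousLinearMap.smul_apply, ContinuousLinearMap.smul_apply, map_smul, hintpow n x,
      ← Complex.coe_smul]
    congr 1
    push_cast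
    ring
  refine ⟨C, hC0, fun t ht => ?_⟩
  refine le_trans (ContinuousLinearMap.opNorm_le_bound _ (by positivity) fun x => ?_) (hCb t ht)
  calc ‖exp (t • Alim) x‖ = ‖cmap d (exp (t • Alim) x)‖ := (cmap_norm _).symm
    _ = ‖exp ((t:ℂ) • fc) (cmap d x)‖ := by rw [hexp t x]
    _ ≤ ‖exp ((t:ℂ) • fc)‖ * ‖cmap d x‖ := ContinuousLinearMap.le_opNorm _ _
    _ = ‖exp ((t:ℂ) • fc)‖ * ‖x‖ := by rw [cmap_norm]

/-- Growth bound on the fundamental matrix: if `A(t) → A` as `t → ∞`, where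
every complex eigenvalue of `A` has real part `≤ λ`, and `Φ_s` solves `Φ_s' (t) = A(t) Φ_s(t)`,
`Φ_s(s) = I`, then for every `α > 0` there is `K_α` with
`‖Φ_s(t)‖ ≤ K_α e^{(λ+α)(t−s)}` for all `t ≥ s ≥ 0`. -/
theorem stmt7 {d : ℕ} (lam : ℝ)
    (Alim : EuclideanSpace ℝ (Fin d) →L[ℝ] EuclideanSpace ℝ (Fin d))
    (A : ℝ → (EuclideanSpace ℝ (Fin d) →L[ℝ] EuclideanSpace ℝ (Fin d)))
    (hAc : ContinuousOn A (Ici 0))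
    (hAlim : Tendsto A atTop (nhds Alim))
    (hspec : ∀ μ : ℂ,
      ((Alim.toLinearMap.charpoly.map (algebraMap ℝ ℂ)).IsRoot μ) → μ.re ≤ lam)
    (Φ : ℝ → ℝ → (EuclideanSpace ℝ (Fin d) →L[ℝ] EuclideanSpace ℝ (Fin d)))
    (hΦinit : ∀ s ≥ (0:ℝ), Φ s s = 1)
    (hΦode : ∀ s ≥ (0:ℝ), ∀ t ≥ s, HasDerivAt (fun u => Φ s u) ((A t).comp (Φ s t)) t) :
    ∀ α > (0:ℝ), ∃ Kα > (0:ℝ), ∀ s t : ℝ, 0 ≤ s → s ≤ t →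
      ‖Φ s t‖ ≤ Kα * Real.exp ((lam + α) * (t - s)) := by
  intro α hα
  letI : NormedAlgebra ℚ (EuclideanSpace ℝ (Fin d) →L[ℝ] EuclideanSpace ℝ (Fin d)) :=
    .restrictScalars ℚ ℝ _
  set β := α / 2 with hβdef
  have hβ : 0 < β := by positivity
  obtain ⟨C, hC0, hCb⟩ := real_exp_bound lam β hβ Alim hspec
  set γ := lam + β with hγdef
  set ε := β / C with hεdef
  have hε : 0 < ε := by positivity
  -- tail bound
  have htail : ∀ᶠ u in atTop, ‖A u - Alim‖ ≤ ε := by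
    have := hAlim (Metric.closedBall_mem_nhds Alim hε)
    filter_upwards [this] with u hu
    rw [Set.mem_preimage, Metric.mem_closedBall, dist_eq_norm] at hu
    exact hu
  obtain ⟨T₀, hT₀⟩ := Filter.eventually_atTop.mp htail
  set T := max T₀ 0 with hTdef
  have hT0 : 0 ≤ T := le_max_right _ _
  have hTtail : ∀ u ≥ T, ‖A u - Alim‖ ≤ ε := fun u hu => hT₀ u ((le_max_left _ _).trans hu)
  -- compact bound
  obtain ⟨Mb, hMb⟩ := (isCompact_Icc (a := (0:ℝ)) (b := T)).exists_bound_of_continuousOn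
    (hAc.mono (Icc_subset_Ici_self))
  set M2 := Mb + ‖Alim‖ with hM2def
  have hM2 : 0 ≤ M2 := by
    have := hMb 0 (by simp [hT0])
    have h0 : (0:ℝ) ≤ ‖A 0‖ := norm_nonneg _
    have : 0 ≤ Mb := le_trans h0 this
    positivity
  have hbnd : ∀ u ∈ Icc (0:ℝ) T, ‖A u - Alim‖ ≤ M2 := by
    intro u hu
    calc ‖A u - Alim‖ ≤ ‖A u‖ + ‖Alim‖ := norm_sub_le _ _
      _ ≤ Mb + ‖Alim‖ := add_le_add_left (hMb u hu) _
  -- final constant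
  refine ⟨C * Real.exp (C * M2 * Real.exp T), by positivity, fun s t hs hst => ?_⟩
  have hs' : (0:ℝ) ≤ s := hs
  -- continuity of Φ s on Ici s
  have hΦcont : ContinuousOn (Φ s) (Ici s) := fun u hu =>
    ((hΦode s hs u hu).continuousAt).continuousWithinAt
  have hz : (0:ℝ) • Alim = 0 := zero_smul ℝ Alim
  have hadd : ∀ a b : ℝ, (a + b) • Alim = a • Alim + b • Alim := fun a b => add_smul a b Alim
  -- the integral equation
  set Ψ : ℝ → (EuclideanSpace ℝ (Fin d) →L[ℝ] EuclideanSpace ℝ (Fin d)) :=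
    fun u => exp ((s - u) • Alim) * Φ s u with hΨdef
  set W : ℝ → (EuclideanSpace ℝ (Fin d) →L[ℝ] EuclideanSpace ℝ (Fin d)) :=
    fun u => exp ((s - u) • Alim) * ((A u - Alim) * Φ s u) with hWdef
  have hexpcont : Continuous (fun u : ℝ => exp ((s - u) • Alim)) :=
    exp_continuous.comp ((continuous_const.sub continuous_id).smul continuous_const)
  have hΨd : ∀ u ≥ s, HasDerivAt Ψ (W u) u := by
    intro u hu
    have h1 : HasDerivAt (fun r : ℝ => exp (r • Alim)) (exp ((s - u) • Alim) * Alim) (s - u) :=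
      hasDerivAt_exp_smul_const (𝕂 := ℝ) Alim (s - u)
    have h2 : HasDerivAt (fun r : ℝ => s - r) (-(1:ℝ)) u := (hasDerivAt_id u).const_sub s
    have h3 : HasDerivAt (fun r : ℝ => exp ((s - r) • Alim))
        ((-(1:ℝ)) • (exp ((s - u) • Alim) * Alim)) u := h1.scomp u h2
    have h4 := hΦode s hs u hu
    have h4' : HasDerivAt (fun r => Φ s r) (A u * Φ s u) u := h4
    have h5 := h3.mul h4'
    have hneg : (-(1:ℝ)) • (exp ((s - u) • Alim) * Alim)
        = -(exp ((s - u) • Alim) * Alim) := by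
      ext x
      simp
    have h6 : (-(1:ℝ)) • (exp ((s - u) • Alim) * Alim) * Φ s u
        + exp ((s - u) • Alim) * (A u * Φ s u) = W u := by
      rw [hneg, hWdef]
      ext x
      simp only [ContinuousLinearMap.add_apply, ContinuousLinearMap.mul_apply,
        ContinuousLinearMap.neg_apply, ContinuousLinearMap.sub_apply, map_sub,
        ContinuousLinearMap.smul_apply, PiLp.add_apply, PiLp.sub_apply, PiLp.smul_apply, PiLp.neg_apply,
        smul_eq_mul, neg_one_mul]
      ring
    exact h6 ▸ h5
  have hWcont : ContinuousOn W (Ici s) := by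
    have hAs : ContinuousOn (fun u => A u - Alim) (Ici s) :=
      (hAc.mono (Ici_subset_Ici.mpr hs')).sub continuousOn_const
    exact (hexpcont.continuousOn).mul (hAs.mul hΦcont)
  have hΨs : Ψ s = 1 := by
    show exp ((s - s) • Alim) * Φ s s = 1
    rw [sub_self, hz, exp_zero, hΦinit s hs, one_mul]
  -- exponential product identity
  have hprod : ∀ a b : ℝ, exp (a • Alim) * exp (b • Alim) = exp ((a + b) • Alim) := by
    intro a b
    rw [hadd]
    have hcomm : Commute (a • Alim) (b • Alim) := by
      show _ = _
      ext x
      simp only [ContinuousLinearMap.mul_apply, ContinuousLinearMap.smul_apply, map_smul,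
        smul_smul]
      rw [mul_comm]
    exact (exp_add_of_commute hcomm).symm
  have hkey : ∀ τ ≥ s, Φ s τ = exp ((τ - s) • Alim)
      + ∫ u in s..τ, exp ((τ - u) • Alim) * ((A u - Alim) * Φ s u) := by
    intro τ hτ
    have hWint : IntervalIntegrable W MeasureTheory.volume s τ := by
      refine (hWcont.mono ?_).intervalIntegrable
      rw [uIcc_of_le hτ]
      exact Icc_subset_Ici_self
    have hftc : ∫ u in s..τ, W u = Ψ τ - Ψ s := by
      refine intervalIntegral.integral_eq_sub_of_hasDerivAt (fun u hu => ?_) hWint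
      rw [uIcc_of_le hτ] at hu
      exact hΨd u hu.1
    have hΨτ : Ψ τ = 1 + ∫ u in s..τ, W u := by
      rw [hftc, hΨs]
      abel
    have hE : exp ((τ - s) • Alim) * Ψ τ = Φ s τ := by
      rw [hΨdef, ← mul_assoc, hprod]
      have h0 : τ - s + (s - τ) = 0 := by ring
      rw [h0, hz, exp_zero, one_mul]
    rw [← hE, hΨτ, mul_add, mul_one]
    congr 1
    have hcomm := (ContinuousLinearMap.compL ℝ (EuclideanSpace ℝ (Fin d)) (EuclideanSpace ℝ (Fin d))
      (EuclideanSpace ℝ (Fin d)) (exp ((τ - s) • Alim))).intervalIntegral_comp_comm hWint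
    -- compL E applied is E.comp = E * ·
    have hcompL : ∀ P : EuclideanSpace ℝ (Fin d) →L[ℝ] EuclideanSpace ℝ (Fin d),
        (ContinuousLinearMap.compL ℝ (EuclideanSpace ℝ (Fin d)) (EuclideanSpace ℝ (Fin d))
          (EuclideanSpace ℝ (Fin d)) (exp ((τ - s) • Alim))) P
          = exp ((τ - s) • Alim) * P := fun P => rfl
    rw [hcompL] at hcomm
    rw [← hcomm]
    refine intervalIntegral.integral_congr fun u hu => ?_
    rw [hcompL, hWdef, ← mul_assoc, hprod]
    congr 3
    ring
  -- norms
  set gg : ℝ → ℝ := fun u => Real.exp (-(γ * (max s u - s))) * ‖Φ s (max s u)‖ with hggdef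
  set hh : ℝ → ℝ := fun u => C * ‖A (max s u) - Alim‖ with hhhdef
  have hggcont : Continuous gg := by
    have h1 : Continuous fun u : ℝ => Φ s (max s u) :=
      hΦcont.comp_continuous (continuous_const.max continuous_id) fun u => le_max_left s u
    refine (Real.continuous_exp.comp ?_).mul h1.norm
    exact (continuous_const.mul ((continuous_const.max continuous_id).sub continuous_const)).neg
  have hhhcont : Continuous hh := by
    have h1 : Continuous fun u : ℝ => A (max s u) :=
      (hAc.mono (Ici_subset_Ici.mpr hs')).comp_continuous
        (continuous_const.max continuous_id) fun u => le_max_left s u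
    exact continuous_const.mul (h1.sub continuous_const).norm
  have hhh0 : ∀ u, 0 ≤ hh u := fun u => mul_nonneg hC0.le (norm_nonneg _)
  have hgle : ∀ τ ≥ s, gg τ ≤ C + ∫ u in s..τ, hh u * gg u := by
    intro τ hτ
    have hmax : max s τ = τ := max_eq_right hτ
    have hΦτ := hkey τ hτ
    -- bound the norm of the integral
    have hbint : ‖∫ u in s..τ, exp ((τ - u) • Alim) * ((A u - Alim) * Φ s u)‖
        ≤ ∫ u in s..τ, C * Real.exp (γ * (τ - u)) * (‖A u - Alim‖ * ‖Φ s u‖) := by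
      have hgint : IntervalIntegrable
          (fun u => C * Real.exp (γ * (τ - u)) * (‖A u - Alim‖ * ‖Φ s u‖))
          MeasureTheory.volume s τ := by
        refine ContinuousOn.intervalIntegrable ?_
        rw [uIcc_of_le hτ]
        have hAu : ContinuousOn (fun u => ‖A u - Alim‖) (Icc s τ) :=
          (((hAc.mono ((Icc_subset_Ici_self).trans (Ici_subset_Ici.mpr hs'))).sub
            continuousOn_const).norm)
        have hΦu : ContinuousOn (fun u => ‖Φ s u‖) (Icc s τ) :=
          (hΦcont.mono Icc_subset_Ici_self).norm
        exact ((continuous_const.mul ((continuous_const.mul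
          (continuous_const.sub continuous_id)).rexp)).continuousOn).mul (hAu.mul hΦu)
      have hgnn : 0 ≤ ∫ u in s..τ, C * Real.exp (γ * (τ - u)) * (‖A u - Alim‖ * ‖Φ s u‖) := by
        refine intervalIntegral.integral_nonneg hτ fun u _ => by positivity
      refine le_trans (intervalIntegral.norm_integral_le_abs_of_norm_le ?_ hgint)
        (le_of_eq (abs_of_nonneg hgnn))
      · rw [MeasureTheory.ae_restrict_iff' measurableSet_uIoc]
        refine MeasureTheory.ae_of_all _ fun u hu => ?_
        rw [uIoc_of_le hτ] at hu
        calc ‖exp ((τ - u) • Alim) * ((A u - Alim) * Φ s u)‖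
            ≤ ‖exp ((τ - u) • Alim)‖ * ‖(A u - Alim) * Φ s u‖ := norm_mul_le _ _
          _ ≤ ‖exp ((τ - u) • Alim)‖ * (‖A u - Alim‖ * ‖Φ s u‖) := by
              refine mul_le_mul_of_nonneg_left (norm_mul_le _ _) (norm_nonneg _)
          _ ≤ C * Real.exp (γ * (τ - u)) * (‖A u - Alim‖ * ‖Φ s u‖) := by
              refine mul_le_mul_of_nonneg_right (hCb (τ - u) (by linarith [hu.2])) ?_
              positivity
    have h1 : ‖Φ s τ‖ ≤ C * Real.exp (γ * (τ - s))
        + ∫ u in s..τ, C * Real.exp (γ * (τ - u)) * (‖A u - Alim‖ * ‖Φ s u‖) := by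
      rw [hΦτ]
      exact (norm_add_le _ _).trans (add_le_add (hCb (τ - s) (by linarith)) hbint)
    -- multiply by exp(-γ(τ-s))
    have h2 : gg τ ≤ Real.exp (-(γ * (τ - s))) * (C * Real.exp (γ * (τ - s)))
        + Real.exp (-(γ * (τ - s)))
          * ∫ u in s..τ, C * Real.exp (γ * (τ - u)) * (‖A u - Alim‖ * ‖Φ s u‖) := by
      rw [hggdef]
      simp only [hmax]
      rw [← mul_add]
      exact mul_le_mul_of_nonneg_left h1 (Real.exp_pos _).le
    have h3 : Real.exp (-(γ * (τ - s))) * (C * Real.exp (γ * (τ - s))) = C := by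
      rw [show Real.exp (-(γ * (τ - s))) * (C * Real.exp (γ * (τ - s)))
          = C * (Real.exp (-(γ * (τ - s))) * Real.exp (γ * (τ - s))) by ring, ← Real.exp_add]
      simp
    have h4 : Real.exp (-(γ * (τ - s)))
          * ∫ u in s..τ, C * Real.exp (γ * (τ - u)) * (‖A u - Alim‖ * ‖Φ s u‖)
        = ∫ u in s..τ, hh u * gg u := by
      rw [← intervalIntegral.integral_const_mul]
      refine intervalIntegral.integral_congr fun u hu => ?_
      rw [uIcc_of_le hτ] at hu
      have hmaxu : max s u = u := max_eq_right hu.1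
      rw [hhhdef, hggdef]
      simp only [hmaxu]
      have hee : Real.exp (-(γ * (τ - s))) * Real.exp (γ * (τ - u))
          = Real.exp (-(γ * (u - s))) := by
        rw [← Real.exp_add]
        congr 1
        ring
      rw [← hee]
      ring
    rw [h3, h4] at h2
    exact h2
  have hgron := gronwall_int hggcont hhhcont hhh0 hgle t hst
  -- bound the integral of hh
  have hhint : (∫ u in s..t, hh u) ≤ C * ε * (t - s) + C * M2 * Real.exp T := by
    have hdom : ∀ u ∈ Icc s t, hh u ≤ C * ε + C * M2 * Real.exp (T - u) := by
      intro u hu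
      have hmaxu : max s u = u := max_eq_right hu.1
      rw [hhhdef]
      simp only [hmaxu]
      rcases le_or_gt T u with h | h
      · have := hTtail u h
        have h2 : C * ‖A u - Alim‖ ≤ C * ε := mul_le_mul_of_nonneg_left this hC0.le
        have h3 : 0 ≤ C * M2 * Real.exp (T - u) := by positivity
        linarith
      · have hu0 : 0 ≤ u := le_trans hs' hu.1
        have := hbnd u ⟨hu0, h.le⟩
        have h2 : C * ‖A u - Alim‖ ≤ C * M2 := mul_le_mul_of_nonneg_left this hC0.le
        have h3 : (1:ℝ) ≤ Real.exp (T - u) := by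
          rw [Real.one_le_exp_iff]
          linarith
        have h4 : C * M2 ≤ C * M2 * Real.exp (T - u) := by
          nlinarith [mul_nonneg hC0.le hM2]
        have h5 : 0 ≤ C * ε := by positivity
        linarith
    have hmono : (∫ u in s..t, hh u) ≤ ∫ u in s..t, (C * ε + C * M2 * Real.exp (T - u)) := by
      refine intervalIntegral.integral_mono_on hst (hhhcont.intervalIntegrable _ _)
        (Continuous.intervalIntegrable (by fun_prop) _ _) hdom
    have hcalc : (∫ u in s..t, (C * ε + C * M2 * Real.exp (T - u)))
        = C * ε * (t - s) + C * M2 * (Real.exp (T - s) - Real.exp (T - t)) := by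
      have hi2 : IntervalIntegrable (fun u : ℝ => C * M2 * Real.exp (T - u))
          MeasureTheory.volume s t := Continuous.intervalIntegrable (by fun_prop) _ _
      rw [intervalIntegral.integral_add (intervalIntegrable_const) hi2]
      rw [intervalIntegral.integral_const]
      congr 1
      · rw [smul_eq_mul]; ring
      · rw [intervalIntegral.integral_const_mul]
        congr 1
        have : ∀ u ∈ uIcc s t, HasDerivAt (fun r => -Real.exp (T - r)) (Real.exp (T - u)) u := by
          intro u _
          have h1 : HasDerivAt (fun r : ℝ => T - r) (-1 : ℝ) u := by
            simpa using (hasDerivAt_id u).const_sub T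
          have h2 := (Real.hasDerivAt_exp (T - u)).scomp u h1
          have h3 := h2.neg
          exact h3.congr_deriv (by simp)
        rw [intervalIntegral.integral_eq_sub_of_hasDerivAt this
          (Continuous.intervalIntegrable (by fun_prop) _ _)]
        ring
    have hfinal : C * ε * (t - s) + C * M2 * (Real.exp (T - s) - Real.exp (T - t))
        ≤ C * ε * (t - s) + C * M2 * Real.exp T := by
      have h1 : Real.exp (T - s) ≤ Real.exp T := Real.exp_le_exp.mpr (by linarith)
      have h2 : (0:ℝ) < Real.exp (T - t) := Real.exp_pos _
      have h3 : 0 ≤ C * M2 := mul_nonneg hC0.le hM2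
      nlinarith
    linarith [hmono, hcalc ▸ hmono]
  -- conclude
  have hggt : gg t = Real.exp (-(γ * (t - s))) * ‖Φ s t‖ := by
    rw [hggdef]
    simp only [max_eq_right hst]
  have hstep : ‖Φ s t‖ ≤ C * Real.exp (∫ u in s..t, hh u) * Real.exp (γ * (t - s)) := by
    have := hgron
    rw [hggt] at this
    have h2 := mul_le_mul_of_nonneg_right this (Real.exp_pos (γ * (t - s))).le
    have h3 : Real.exp (-(γ * (t - s))) * ‖Φ s t‖ * Real.exp (γ * (t - s)) = ‖Φ s t‖ := by
      rw [show Real.exp (-(γ * (t - s))) * ‖Φ s t‖ * Real.exp (γ * (t - s))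
          = (Real.exp (-(γ * (t - s))) * Real.exp (γ * (t - s))) * ‖Φ s t‖ by ring,
        ← Real.exp_add]
      simp
    rw [h3] at h2
    exact h2
  calc ‖Φ s t‖ ≤ C * Real.exp (∫ u in s..t, hh u) * Real.exp (γ * (t - s)) := hstep
    _ ≤ C * Real.exp (C * ε * (t - s) + C * M2 * Real.exp T) * Real.exp (γ * (t - s)) := by
        refine mul_le_mul_of_nonneg_right
          (mul_le_mul_of_nonneg_left (Real.exp_le_exp.mpr hhint) hC0.le) (Real.exp_pos _).le
    _ = C * Real.exp (C * M2 * Real.exp T) * Real.exp ((γ + C * ε) * (t - s)) := by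
        have h : Real.exp (C * ε * (t - s) + C * M2 * Real.exp T) * Real.exp (γ * (t - s))
            = Real.exp (C * M2 * Real.exp T) * Real.exp ((γ + C * ε) * (t - s)) := by
          rw [← Real.exp_add, ← Real.exp_add]
          congr 1
          ring
        rw [mul_assoc, h, ← mul_assoc]
    _ ≤ C * Real.exp (C * M2 * Real.exp T) * Real.exp ((lam + α) * (t - s)) := by
        refine mul_le_mul_of_nonneg_left (Real.exp_le_exp.mpr ?_) (by positivity)
        have hCε : C * ε = β := by
          rw [hεdef]
          field_simp
        rw [hγdef, hCε, hβdef]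
        have : lam + α / 2 + α / 2 = lam + α := by ring
        rw [this]
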